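/- The ideal Γ equals the kernel of φ; that is, Γ = Γ':h^∞ is the defining ideal of the multi-Rees algebra R[I_1 t_1,…,I_s t_s] presented by the variables Y_{ij} ↦ f_{ij}T_i. -/

import Mathlib

open MvPolynomial

/-- Theorem (Cox–Lin–Sosa, generalized): the saturation `Γ = Γ' : h^∞` equals the kernel of
the presentation map `φ` of the multi-Rees algebra, where `φ (Y i j) = f i j * T i`. -/
theorem defining_ideal_of_multiRees
    (k : Type*) [Field k] (m s : ℕ) (n : Fin s → ℕ)
    (f : (i : Fin s) → Fin (n i + 1) → MvPolynomial (Fin m) k)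
    (hf : ∀ i, f i 0 ≠ 0)
    (φ : MvPolynomial (Fin m ⊕ (Σ i : Fin s, Fin (n i + 1))) k →ₐ[k]
         MvPolynomial (Fin m ⊕ Fin s) k)
    (hφ : φ = aeval (Sum.elim (fun i => X (Sum.inl i))
        (fun p => rename Sum.inl (f p.1 p.2) * X (Sum.inr p.1))))
    (Γ' : Ideal (MvPolynomial (Fin m ⊕ (Σ i : Fin s, Fin (n i + 1))) k))
    (hΓ' : Γ' = Ideal.span { g | ∃ (i : Fin s) (j j' : Fin (n i + 1)),
        g = X (Sum.inr ⟨i, j⟩) * rename Sum.inl (f i j')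
          - X (Sum.inr ⟨i, j'⟩) * rename Sum.inl (f i j) })
    (h : MvPolynomial (Fin m ⊕ (Σ i : Fin s, Fin (n i + 1))) k)
    (hh : h = ∏ i, rename Sum.inl (f i 0)) :
    ∀ g, g ∈ RingHom.ker φ.toRingHom ↔ ∃ N : ℕ, h ^ N * g ∈ Γ' := by
  classical
  -- the "small variables into big variables" map
  set u : (Fin m ⊕ Fin s) → (Fin m ⊕ (Σ i : Fin s, Fin (n i + 1))) :=
    Sum.map id (fun i => (⟨i, 0⟩ : Σ i : Fin s, Fin (n i + 1))) with hu
  have hur : ∀ p : MvPolynomial (Fin m) k,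
      rename u (rename Sum.inl p) =
        (rename Sum.inl p : MvPolynomial (Fin m ⊕ (Σ i : Fin s, Fin (n i + 1))) k) := by
    intro p
    rw [rename_rename]
    congr 1
  have hφr : ∀ p : MvPolynomial (Fin m) k,
      φ (rename Sum.inl p) = rename Sum.inl p := by
    intro p
    rw [hφ, aeval_rename, Sum.elim_comp_inl]
    induction p using MvPolynomial.induction_on <;> simp_all [algebraMap_eq]
  have hφX : ∀ (i : Fin s) (j : Fin (n i + 1)),
      φ (X (Sum.inr ⟨i, j⟩)) = rename Sum.inl (f i j) * X (Sum.inr i) := by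
    intro i j
    rw [hφ, aeval_X]
    rfl
  -- Γ' is contained in the kernel of φ
  have Γle : Γ' ≤ RingHom.ker φ.toRingHom := by
    rw [hΓ', Ideal.span_le]
    rintro g ⟨i, j, j', rfl⟩
    simp only [SetLike.mem_coe, RingHom.mem_ker, AlgHom.toRingHom_eq_coe, RingHom.coe_coe,
      map_sub, map_mul, hφr, hφX]
    ring
  -- middle-ring version of h
  set H : MvPolynomial (Fin m ⊕ Fin s) k := ∏ i, rename Sum.inl (f i 0) with hH
  have hHh : rename u H = h := by
    rw [hH, hh, map_prod]
    exact Finset.prod_congr rfl fun i _ => hur (f i 0)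
  -- the key elimination lemma
  have key : ∀ g : MvPolynomial (Fin m ⊕ (Σ i : Fin s, Fin (n i + 1))) k,
      ∃ (N : ℕ) (q : MvPolynomial (Fin m ⊕ Fin s) k), h ^ N * g - rename u q ∈ Γ' := by
    intro g
    induction g using MvPolynomial.induction_on with
    | C a =>
        refine ⟨0, C a, ?_⟩
        simp [rename_C]
    | add p q hp hq =>
        obtain ⟨Np, qp, hp'⟩ := hp
        obtain ⟨Nq, qq, hq'⟩ := hq
        refine ⟨Np + Nq, H ^ Nq * qp + H ^ Np * qq, ?_⟩
        have hexp : rename u (H ^ Nq * qp + H ^ Np * qq)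
            = h ^ Nq * rename u qp + h ^ Np * rename u qq := by
          simp [map_add, map_mul, map_pow, hHh]
        rw [hexp]
        have hid : h ^ (Np + Nq) * (p + q) - (h ^ Nq * rename u qp + h ^ Np * rename u qq)
            = h ^ Nq * (h ^ Np * p - rename u qp) + h ^ Np * (h ^ Nq * q - rename u qq) := by
          ring
        rw [hid]
        exact add_mem (Ideal.mul_mem_left _ _ hp') (Ideal.mul_mem_left _ _ hq')
    | mul_X p v hp =>
        obtain ⟨N, q, hp'⟩ := hp
        rcases v with x | ⟨i, j⟩
        · refine ⟨N, q * X (Sum.inl x), ?_⟩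
          have hexp : rename u (q * X (Sum.inl x)) = rename u q * X (Sum.inl x) := by
            rw [map_mul, rename_X]
            rfl
          rw [hexp]
          have hid : h ^ N * (p * X (Sum.inl x)) - rename u q * X (Sum.inl x)
              = X (Sum.inl x) * (h ^ N * p - rename u q) := by ring
          rw [hid]
          exact Ideal.mul_mem_left _ _ hp'
        · refine ⟨N + 1, q * X (Sum.inr i) * rename Sum.inl (f i j)
            * ∏ i' ∈ Finset.univ.erase i, rename Sum.inl (f i' 0), ?_⟩
          have hexp : rename u (q * X (Sum.inr i) * rename Sum.inl (f i j)
              * ∏ i' ∈ Finset.univ.erase i, rename Sum.inl (f i' 0))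
              = rename u q * X (Sum.inr ⟨i, 0⟩) * rename Sum.inl (f i j)
              * ∏ i' ∈ Finset.univ.erase i, rename Sum.inl (f i' 0) := by
            rw [map_mul, map_mul, map_mul, rename_X, hur, map_prod]
            have : ∀ i' ∈ Finset.univ.erase i,
                rename u (rename Sum.inl (f i' 0)) = rename Sum.inl (f i' 0) :=
              fun i' _ => hur (f i' 0)
            rw [Finset.prod_congr rfl this]
            rfl
          rw [hexp]
          have hsplit : h = rename Sum.inl (f i 0)
              * ∏ i' ∈ Finset.univ.erase i, rename Sum.inl (f i' 0) := by
            rw [hh]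
            exact (Finset.mul_prod_erase _ _ (Finset.mem_univ i)).symm
          have hgen : X (Sum.inr ⟨i, j⟩) * rename Sum.inl (f i 0)
              - X (Sum.inr ⟨i, 0⟩) * rename Sum.inl (f i j) ∈ Γ' := by
            rw [hΓ']
            exact Ideal.subset_span ⟨i, j, 0, rfl⟩
          have hid : h ^ (N + 1) * (p * X (Sum.inr ⟨i, j⟩))
              - (rename u q * X (Sum.inr ⟨i, 0⟩) * rename Sum.inl (f i j)
                * ∏ i' ∈ Finset.univ.erase i, rename Sum.inl (f i' 0))
              = (h * X (Sum.inr ⟨i, j⟩)) * (h ^ N * p - rename u q)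
              + (rename u q * ∏ i' ∈ Finset.univ.erase i, rename Sum.inl (f i' 0))
                * (X (Sum.inr ⟨i, j⟩) * rename Sum.inl (f i 0)
                  - X (Sum.inr ⟨i, 0⟩) * rename Sum.inl (f i j)) := by
            rw [hsplit]; ring
          rw [hid]
          exact add_mem (Ideal.mul_mem_left _ _ hp') (Ideal.mul_mem_left _ _ hgen)
  -- injectivity of φ ∘ rename u
  set ψ : MvPolynomial (Fin m ⊕ Fin s) k →ₐ[k] MvPolynomial (Fin m ⊕ Fin s) k :=
    φ.comp (rename u) with hψ
  set K := FractionRing (MvPolynomial (Fin m) k) with hK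
  set ι : MvPolynomial (Fin m) k →+* K := algebraMap (MvPolynomial (Fin m) k) K with hι
  have hιinj : Function.Injective ι := IsFractionRing.injective _ _
  set e : MvPolynomial (Fin m ⊕ Fin s) k →+* MvPolynomial (Fin s) K :=
    (MvPolynomial.map ι).comp ((sumToIter k (Fin s) (Fin m)).comp
      (rename (Equiv.sumComm (Fin m) (Fin s))).toRingHom) with he
  have hsum_inj : Function.Injective (sumToIter k (Fin s) (Fin m)) := by
    intro a b hab
    have hEq : sumToIter k (Fin s) (Fin m) = (sumRingEquiv k (Fin s) (Fin m)).toRingHom := by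
      apply MvPolynomial.ringHom_ext
      · intro a; simp [sumToIter_C]
      · rintro (x | x) <;> simp [sumToIter_Xl, sumToIter_Xr]
    exact (sumRingEquiv k (Fin s) (Fin m)).injective (by rw [hEq] at hab; exact hab)
  have heinj : Function.Injective e := by
    refine (MvPolynomial.map_injective ι hιinj).comp (hsum_inj.comp ?_)
    exact rename_injective _ (Equiv.injective _)
  have heC : ∀ a : k, e (C a) = C (ι (C a)) := by
    intro a
    simp [he, rename_C, sumToIter_C, map_C]
  have heXl : ∀ x : Fin m, e (X (Sum.inl x)) = C (ι (X x)) := by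
    intro x
    simp [he, rename_X, sumToIter_Xr, map_C]
  have heXr : ∀ i : Fin s, e (X (Sum.inr i)) = X i := by
    intro i
    simp [he, rename_X, sumToIter_Xl, map_X]
  have heren : ∀ p : MvPolynomial (Fin m) k, e (rename Sum.inl p) = C (ι p) := by
    intro p
    have : e.comp (rename (Sum.inl : Fin m → Fin m ⊕ Fin s)).toRingHom
        = (C : K →+* MvPolynomial (Fin s) K).comp ι := by
      apply MvPolynomial.ringHom_ext
      · intro a
        simp [rename_C, heC]
      · intro x
        simp [rename_X, heXl]
    exact congrFun (congrArg (fun g => g.toFun) this) p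
  set χ : MvPolynomial (Fin s) K →ₐ[K] MvPolynomial (Fin s) K :=
    aeval (fun i => C ((ι (f i 0))⁻¹) * X i) with hχ
  have hψC : ∀ a : k, ψ (C a) = C a := by
    intro a
    rw [hψ, AlgHom.comp_apply, rename_C, hφ]
    simp [algebraMap_eq]
  have hψXl : ∀ x : Fin m, ψ (X (Sum.inl x)) = X (Sum.inl x) := by
    intro x
    rw [hψ, AlgHom.comp_apply, rename_X, hφ]
    simp [hu]
  have hψXr : ∀ i : Fin s, ψ (X (Sum.inr i)) = rename Sum.inl (f i 0) * X (Sum.inr i) := by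
    intro i
    rw [hψ, AlgHom.comp_apply, rename_X]
    have : u (Sum.inr i) = Sum.inr ⟨i, 0⟩ := rfl
    rw [this, hφX]
  have hιf : ∀ i : Fin s, ι (f i 0) ≠ 0 := by
    intro i hz
    exact hf i (hιinj (by rw [hz, map_zero]))
  have hcomp : ∀ p, χ (e (ψ p)) = e p := by
    intro p
    have : (χ.toRingHom.comp e).comp ψ.toRingHom = e := by
      apply MvPolynomial.ringHom_ext
      · intro a
        simp only [RingHom.comp_apply, AlgHom.toRingHom_eq_coe, RingHom.coe_coe]
        rw [hψC, heC]
        exact aeval_C _ _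
      · rintro (x | i)
        · simp only [RingHom.comp_apply, AlgHom.toRingHom_eq_coe, RingHom.coe_coe]
          rw [hψXl, heXl]
          exact aeval_C _ _
        · simp only [RingHom.comp_apply, AlgHom.toRingHom_eq_coe, RingHom.coe_coe]
          rw [hψXr, map_mul, heren, heXr]
          rw [hχ, map_mul, aeval_X]
          have hc : (aeval fun i => C ((ι (f i 0))⁻¹) * X i) (C (ι (f i 0))
              : MvPolynomial (Fin s) K) = C (ι (f i 0)) := aeval_C _ _
          rw [hc, ← mul_assoc, ← map_mul, mul_inv_cancel₀ (hιf i), map_one, one_mul]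
    exact congrFun (congrArg (fun g => g.toFun) this) p
  have hψinj : Function.Injective ψ := by
    intro a b hab
    exact heinj (by rw [← hcomp a, ← hcomp b, hab])
  -- nonvanishing of φ h
  have hφh : φ h = ∏ i, rename Sum.inl (f i 0) := by
    rw [hh, map_prod]
    exact Finset.prod_congr rfl fun i _ => hφr (f i 0)
  have hφhne : φ h ≠ 0 := by
    rw [hφh]
    refine Finset.prod_ne_zero_iff.2 fun i _ hz => hf i ?_
    exact rename_injective _ Sum.inl_injective (by rw [hz, map_zero])
  -- main equivalence
  intro g
  constructor
  · intro hg
    have hg0 : φ g = 0 := hg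
    obtain ⟨N, q, hmem⟩ := key g
    have h1 : φ (h ^ N * g - rename u q) = 0 := Γle hmem
    have h2 : φ (h ^ N * g) = 0 := by rw [map_mul, hg0, mul_zero]
    have h3 : ψ q = 0 := by
      have := h1
      rw [map_sub, h2, zero_sub, neg_eq_zero] at this
      rw [hψ, AlgHom.comp_apply]
      exact this
    have hq0 : q = 0 := hψinj (by rw [h3, map_zero])
    refine ⟨N, ?_⟩
    rw [hq0, map_zero, sub_zero] at hmem
    exact hmem
  · rintro ⟨N, hN⟩
    have h0 : φ (h ^ N * g) = 0 := Γle hN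
    rw [map_mul, map_pow] at h0
    have : φ g = 0 := by
      rcases mul_eq_zero.mp h0 with hc | hc
      · exact absurd hc (pow_ne_zero N hφhne)
      · exact hc
    exact this
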